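/- arXiv:2601.22940 — 2 statements merged into one kernel-verified Lean document; each statement's English description precedes it below -/
import Mathlib

section
/- Let f : ℝ₊ → ℝ be bounded, continuous, and integrable on (0,∞), and define u(t,x) = ∫₀^∞ K(t,x,y) f(y) dy for t > 0, x > 0. Then u satisfies the clamped biharmonic heat equation ∂ₜ u(t,x) = − ∂ₓ⁴ u(t,x) for all t > 0 and x > 0. -/
open MeasureTheory Filter Set

/-- `Φ(r) = e^{-r} + sin r - cos r`. -/
noncomputable def Phi (r : ℝ) : ℝ := Real.exp (-r) + Real.sin r - Real.cos r

/-- The clamped biharmonic heat kernel on the half-line. -/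
noncomputable def K (t x y : ℝ) : ℝ :=
  (1 / Real.pi) * ∫ k in Set.Ioi (0:ℝ), Real.exp (-k ^ 4 * t) * Phi (k * x) * Phi (k * y)

noncomputable def PhiD : ℕ → ℝ → ℝ
  | 0 => Phi
  | 1 => fun r => -Real.exp (-r) + Real.cos r + Real.sin r
  | 2 => fun r => Real.exp (-r) - Real.sin r + Real.cos r
  | 3 => fun r => -Real.exp (-r) - Real.cos r - Real.sin r
  | (n+4) => PhiD n

lemma phiD_hasDerivAt (n : ℕ) (r : ℝ) : HasDerivAt (PhiD n) (PhiD (n+1) r) r := by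
  induction n using Nat.strong_induction_on with
  | _ n ih =>
    have h1 : HasDerivAt (fun r : ℝ => Real.exp (-r)) (-Real.exp (-r)) r := by
      exact ((Real.hasDerivAt_exp (-r)).comp r (hasDerivAt_neg r)).congr_deriv (by ring)
    match n with
    | 0 =>
      simp only [PhiD, Phi]
      have := ((h1.add (Real.hasDerivAt_sin r)).sub (Real.hasDerivAt_cos r))
      exact this.congr_deriv (by ring)
    | 1 =>
      simp only [PhiD]
      have := ((h1.neg.add (Real.hasDerivAt_cos r)).add (Real.hasDerivAt_sin r))
      exact this.congr_deriv (by ring)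
    | 2 =>
      simp only [PhiD]
      have := ((h1.sub (Real.hasDerivAt_sin r)).add (Real.hasDerivAt_cos r))
      exact this.congr_deriv (by ring)
    | 3 =>
      simp only [PhiD]
      have := ((h1.neg.sub (Real.hasDerivAt_cos r)).sub (Real.hasDerivAt_sin r))
      show HasDerivAt _ (Phi r) r
      exact this.congr_deriv (by simp only [Phi]; ring)
    | (m+4) =>
      show HasDerivAt (PhiD m) (PhiD (m+1) r) r
      exact ih m (by omega)

lemma phiD_bound (n : ℕ) {r : ℝ} (hr : 0 ≤ r) : |PhiD n r| ≤ 3 := by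
  induction n using Nat.strong_induction_on with
  | _ n ih =>
    have he : Real.exp (-r) ≤ 1 := Real.exp_le_one_iff.mpr (by linarith)
    have he' : 0 < Real.exp (-r) := Real.exp_pos _
    have hs := Real.neg_one_le_sin r
    have hs' := Real.sin_le_one r
    have hc := Real.neg_one_le_cos r
    have hc' := Real.cos_le_one r
    match n with
    | 0 => simp only [PhiD, Phi]; rw [abs_le]; constructor <;> nlinarith
    | 1 => simp only [PhiD]; rw [abs_le]; constructor <;> nlinarith
    | 2 => simp only [PhiD]; rw [abs_le]; constructor <;> nlinarith
    | 3 => simp only [PhiD]; rw [abs_le]; constructor <;> nlinarith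
    | (m+4) => exact ih m (by omega)

lemma phi_bound {r : ℝ} (hr : 0 ≤ r) : |Phi r| ≤ 3 := phiD_bound 0 hr

lemma phiD_cont (n : ℕ) : Continuous (PhiD n) :=
  continuous_iff_continuousAt.mpr fun r => (phiD_hasDerivAt n r).continuousAt

lemma phi_cont : Continuous Phi := phiD_cont 0

lemma int_pow_exp {t : ℝ} (ht : 0 < t) (n : ℕ) :
    IntegrableOn (fun k : ℝ => k ^ n * Real.exp (-k ^ 4 * t)) (Ioi 0) := by
  have h := integrableOn_rpow_mul_exp_neg_mul_rpow (p := 4) (s := n) (b := t)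
    (lt_of_lt_of_le neg_one_lt_zero (Nat.cast_nonneg n)) (by norm_num) ht
  refine h.congr_fun (fun k hk => ?_) measurableSet_Ioi
  have hk' : (0:ℝ) ≤ k := le_of_lt hk
  dsimp only
  rw [Real.rpow_natCast, ← Real.rpow_natCast k 4]
  norm_num
  left; ring

lemma int_exp {t : ℝ} (ht : 0 < t) :
    IntegrableOn (fun k : ℝ => Real.exp (-k ^ 4 * t)) (Ioi 0) := by
  have := int_pow_exp ht 0
  simpa using this
set_option maxHeartbeats 1000000 in
/-- `u(t,x) = ∫₀^∞ K(t,x,y) f(y) dy` satisfies `∂ₜ u = -∂ₓ⁴ u` for `t > 0, x > 0`. -/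
theorem stmt0 (f : ℝ → ℝ)
    (hf_cont : ContinuousOn f (Set.Ici 0))
    (hf_bdd : ∃ M, ∀ x ≥ (0:ℝ), |f x| ≤ M)
    (hf_int : IntegrableOn f (Set.Ioi 0))
    (u : ℝ → ℝ → ℝ)
    (hu : ∀ t x, u t x = ∫ y in Set.Ioi (0:ℝ), K t x y * f y) :
    ∀ t > (0:ℝ), ∀ x > (0:ℝ),
      HasDerivAt (fun s => u s x) (-(iteratedDeriv 4 (fun z => u t z) x)) t := by
  intro t ht x hx
  set C : ℝ := ∫ y in Set.Ioi (0:ℝ), |f y| with hCdef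
  have hC0 : 0 ≤ C := integral_nonneg fun _ => abs_nonneg _
  have hfabs : Integrable (fun y => |f y|) (volume.restrict (Ioi 0)) := by
    simpa [Real.norm_eq_abs] using hf_int.norm
  set g : ℝ → ℝ := fun k => ∫ y in Set.Ioi (0:ℝ), Phi (k * y) * f y with hgdef
  -- measurability of g
  have hgm : AEStronglyMeasurable g (volume.restrict (Ioi 0)) := by
    have h1 : AEStronglyMeasurable (fun p : ℝ × ℝ => Phi (p.1 * p.2) * f p.2)
        ((volume.restrict (Ioi 0)).prod (volume.restrict (Ioi 0))) :=
      ((phi_cont.comp (continuous_fst.mul continuous_snd)).aestronglyMeasurable).mul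
        hf_int.1.comp_snd
    exact h1.integral_prod_right'
  -- bound on g
  have hgb : ∀ k : ℝ, 0 ≤ k → |g k| ≤ 3 * C := by
    intro k hk
    have h1 : |g k| ≤ ∫ y in Set.Ioi (0:ℝ), ‖Phi (k * y) * f y‖ := by
      simpa [Real.norm_eq_abs] using
        norm_integral_le_integral_norm (μ := volume.restrict (Ioi 0))
          (fun y => Phi (k * y) * f y)
    refine h1.trans ?_
    rw [hCdef, ← integral_const_mul]
    refine integral_mono_of_nonneg (Eventually.of_forall fun y => norm_nonneg _)
      (hfabs.const_mul 3) ?_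
    filter_upwards [ae_restrict_mem measurableSet_Ioi] with y hy
    have hky : (0:ℝ) ≤ k * y := mul_nonneg hk (le_of_lt hy)
    rw [Real.norm_eq_abs, abs_mul]
    exact mul_le_mul_of_nonneg_right (phi_bound hky) (abs_nonneg _)
  -- Fubini identity
  have key : ∀ s : ℝ, 0 < s → ∀ z : ℝ, 0 ≤ z →
      u s z = (1 / Real.pi) * ∫ k in Set.Ioi (0:ℝ),
        Real.exp (-k ^ 4 * s) * Phi (k * z) * g k := by
    intro s hs z hz
    have hint : Integrable
        (Function.uncurry fun y k => Real.exp (-k ^ 4 * s) * Phi (k * z) * Phi (k * y) * f y)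
        ((volume.restrict (Ioi 0)).prod (volume.restrict (Ioi 0))) := by
      have hmeas : AEStronglyMeasurable
          (fun p : ℝ × ℝ => Real.exp (-p.2 ^ 4 * s) * Phi (p.2 * z) * Phi (p.2 * p.1) * f p.1)
          ((volume.restrict (Ioi 0)).prod (volume.restrict (Ioi 0))) := by
        have hc : Continuous (fun p : ℝ × ℝ =>
            Real.exp (-p.2 ^ 4 * s) * Phi (p.2 * z) * Phi (p.2 * p.1)) := by
          apply Continuous.mul
          apply Continuous.mul
          · exact Real.continuous_exp.comp (by continuity)
          · exact phi_cont.comp (continuous_snd.mul continuous_const)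
          · exact phi_cont.comp (continuous_snd.mul continuous_fst)
        exact hc.aestronglyMeasurable.mul hf_int.1.comp_fst
      have hbd : Integrable (fun p : ℝ × ℝ => (9 * |f p.1|) * Real.exp (-p.2 ^ 4 * s))
          ((volume.restrict (Ioi 0)).prod (volume.restrict (Ioi 0))) :=
        Integrable.mul_prod (hfabs.const_mul 9) (int_exp hs)
      refine hbd.mono' hmeas ?_
      rw [Measure.prod_restrict]
      filter_upwards [ae_restrict_mem (measurableSet_Ioi.prod measurableSet_Ioi)] with p hp
      obtain ⟨hp1, hp2⟩ := hp
      have h1 : |Phi (p.2 * z)| ≤ 3 := phi_bound (mul_nonneg (le_of_lt hp2) hz)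
      have h2 : |Phi (p.2 * p.1)| ≤ 3 := phi_bound (mul_nonneg (le_of_lt hp2) (le_of_lt hp1))
      have he : (0:ℝ) < Real.exp (-p.2 ^ 4 * s) := Real.exp_pos _
      simp only [Function.uncurry, Real.norm_eq_abs]
      rw [abs_mul, abs_mul, abs_mul, abs_of_pos he]
      calc Real.exp (-p.2 ^ 4 * s) * |Phi (p.2 * z)| * |Phi (p.2 * p.1)| * |f p.1|
          ≤ Real.exp (-p.2 ^ 4 * s) * 3 * 3 * |f p.1| := by
            gcongr <;> positivity
        _ = 9 * |f p.1| * Real.exp (-p.2 ^ 4 * s) := by ring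
    rw [hu]
    calc ∫ y in Set.Ioi (0:ℝ), K s z y * f y
        = ∫ y in Set.Ioi (0:ℝ), (1 / Real.pi) * ∫ k in Set.Ioi (0:ℝ),
            Real.exp (-k ^ 4 * s) * Phi (k * z) * Phi (k * y) * f y := by
          refine integral_congr_ae (Eventually.of_forall fun y => ?_)
          simp only [K]
          rw [mul_assoc, ← integral_mul_const]
      _ = (1 / Real.pi) * ∫ y in Set.Ioi (0:ℝ), ∫ k in Set.Ioi (0:ℝ),
            Real.exp (-k ^ 4 * s) * Phi (k * z) * Phi (k * y) * f y := integral_const_mul _ _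
      _ = (1 / Real.pi) * ∫ k in Set.Ioi (0:ℝ), ∫ y in Set.Ioi (0:ℝ),
            Real.exp (-k ^ 4 * s) * Phi (k * z) * Phi (k * y) * f y := by
          rw [integral_integral_swap hint]
      _ = (1 / Real.pi) * ∫ k in Set.Ioi (0:ℝ),
            Real.exp (-k ^ 4 * s) * Phi (k * z) * g k := by
          congr 1
          refine integral_congr_ae (Eventually.of_forall fun k => ?_)
          simp_rw [mul_assoc]
          rw [integral_const_mul, integral_const_mul]
  -- the x-derivative family
  set v : ℕ → ℝ → ℝ := fun n z => (1 / Real.pi) * ∫ k in Set.Ioi (0:ℝ),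
      k ^ n * Real.exp (-k ^ 4 * t) * PhiD n (k * z) * g k with hvdef
  have haesm : ∀ (n : ℕ) (z : ℝ), AEStronglyMeasurable
      (fun k => k ^ n * Real.exp (-k ^ 4 * t) * PhiD n (k * z) * g k)
      (volume.restrict (Ioi 0)) := by
    intro n z
    have hc : Continuous (fun k : ℝ => k ^ n * Real.exp (-k ^ 4 * t) * PhiD n (k * z)) := by
      apply Continuous.mul
      · exact (continuous_pow n).mul (Real.continuous_exp.comp (by continuity))
      · exact (phiD_cont n).comp (continuous_id.mul continuous_const)
    exact hc.aestronglyMeasurable.mul hgm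
  have hvint : ∀ (n : ℕ) (z : ℝ), 0 ≤ z → Integrable
      (fun k => k ^ n * Real.exp (-k ^ 4 * t) * PhiD n (k * z) * g k)
      (volume.restrict (Ioi 0)) := by
    intro n z hz
    refine ((int_pow_exp ht n).mul_const (9 * C)).mono' (haesm n z) ?_
    filter_upwards [ae_restrict_mem measurableSet_Ioi] with k hk
    have h1 : |PhiD n (k * z)| ≤ 3 := phiD_bound n (mul_nonneg (le_of_lt hk) hz)
    have h2 : |g k| ≤ 3 * C := hgb k (le_of_lt hk)
    have he : (0:ℝ) < Real.exp (-k ^ 4 * t) := Real.exp_pos _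
    have hkn : (0:ℝ) ≤ k ^ n := pow_nonneg (le_of_lt hk) n
    rw [Real.norm_eq_abs, abs_mul, abs_mul, abs_mul, abs_of_nonneg hkn, abs_of_pos he]
    calc k ^ n * Real.exp (-k ^ 4 * t) * |PhiD n (k * z)| * |g k|
        ≤ k ^ n * Real.exp (-k ^ 4 * t) * 3 * (3 * C) := by gcongr <;> positivity
      _ = k ^ n * Real.exp (-k ^ 4 * t) * (9 * C) := by ring
  have hderiv_v : ∀ (n : ℕ), ∀ z : ℝ, 0 < z → HasDerivAt (v n) (v (n+1) z) z := by
    intro n z hz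
    have hball : ∀ z' ∈ Metric.ball z (z/2), (0:ℝ) < z' := by
      intro z' hz'
      rw [Metric.mem_ball, Real.dist_eq, abs_lt] at hz'
      linarith [hz'.1]
    have main := hasDerivAt_integral_of_dominated_loc_of_deriv_le (Metric.ball_mem_nhds z (by linarith : (0:ℝ) < z/2))
      (F := fun z' k => k ^ n * Real.exp (-k ^ 4 * t) * PhiD n (k * z') * g k)
      (F' := fun z' k => k ^ (n+1) * Real.exp (-k ^ 4 * t) * PhiD (n+1) (k * z') * g k)
      (bound := fun k => k ^ (n+1) * Real.exp (-k ^ 4 * t) * (9 * C))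
      (Eventually.of_forall fun z' => haesm n z') (hvint n z (le_of_lt hz))
      (haesm (n+1) z) ?_ ?_ ?_
    · exact (main.2.const_mul (1 / Real.pi))
    · filter_upwards [ae_restrict_mem measurableSet_Ioi] with k hk z' hz'
      have hz'0 : (0:ℝ) < z' := hball z' hz'
      have h1 : |PhiD (n+1) (k * z')| ≤ 3 :=
        phiD_bound (n+1) (mul_nonneg (le_of_lt hk) (le_of_lt hz'0))
      have h2 : |g k| ≤ 3 * C := hgb k (le_of_lt hk)
      have he : (0:ℝ) < Real.exp (-k ^ 4 * t) := Real.exp_pos _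
      have hkn : (0:ℝ) ≤ k ^ (n+1) := pow_nonneg (le_of_lt hk) _
      rw [Real.norm_eq_abs, abs_mul, abs_mul, abs_mul, abs_of_nonneg hkn, abs_of_pos he]
      calc k ^ (n+1) * Real.exp (-k ^ 4 * t) * |PhiD (n+1) (k * z')| * |g k|
          ≤ k ^ (n+1) * Real.exp (-k ^ 4 * t) * 3 * (3 * C) := by gcongr <;> positivity
        _ = k ^ (n+1) * Real.exp (-k ^ 4 * t) * (9 * C) := by ring
    · exact (int_pow_exp ht (n+1)).mul_const (9 * C)
    · filter_upwards [ae_restrict_mem measurableSet_Ioi] with k hk z' _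
      have hD : HasDerivAt (fun w => PhiD n (k * w)) (PhiD (n+1) (k * z') * k) z' := by
        have := (phiD_hasDerivAt n (k * z')).comp z'
          ((hasDerivAt_id z').const_mul k)
        exact this.congr_deriv (by ring)
      have := (hD.const_mul (k ^ n * Real.exp (-k ^ 4 * t))).mul_const (g k)
      exact this.congr_deriv (by ring)
  -- identify iterated derivative with v 4
  have hEq0 : Set.EqOn (fun z => u t z) (v 0) (Ioi 0) := by
    intro z hz
    simp only [hvdef]
    rw [key t ht z (le_of_lt hz)]
    congr 1
    refine integral_congr_ae (Eventually.of_forall fun k => ?_)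
    show Real.exp (-k ^ 4 * t) * Phi (k * z) * g k
      = k ^ 0 * Real.exp (-k ^ 4 * t) * PhiD 0 (k * z) * g k
    show _ = k ^ 0 * Real.exp (-k ^ 4 * t) * Phi (k * z) * g k
    ring
  have step : ∀ (h : ℝ → ℝ) (n : ℕ), Set.EqOn h (v n) (Ioi 0) →
      Set.EqOn (deriv h) (v (n+1)) (Ioi 0) := by
    intro h n hEq z hz
    have h1 : h =ᶠ[nhds z] v n :=
      eventuallyEq_of_mem (Ioi_mem_nhds hz) hEq
    rw [h1.deriv_eq, (hderiv_v n z hz).deriv]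
  have E4 : iteratedDeriv 4 (fun z => u t z) x = v 4 x := by
    have h4 : iteratedDeriv 4 (fun z => u t z)
        = deriv (deriv (deriv (deriv (fun z => u t z)))) := by
      simp [iteratedDeriv_succ, iteratedDeriv_zero]
    rw [h4]
    exact step _ 3 (step _ 2 (step _ 1 (step _ 0 hEq0))) hx
  rw [E4]
  -- time derivative
  have hball : ∀ s ∈ Metric.ball t (t/2), (0:ℝ) < s ∧ t/2 ≤ s := by
    intro s hs
    rw [Metric.mem_ball, Real.dist_eq, abs_lt] at hs
    constructor <;> linarith [hs.1]
  have haesmT : ∀ s : ℝ, AEStronglyMeasurable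
      (fun k => Real.exp (-k ^ 4 * s) * Phi (k * x) * g k) (volume.restrict (Ioi 0)) := by
    intro s
    have hc : Continuous (fun k : ℝ => Real.exp (-k ^ 4 * s) * Phi (k * x)) := by
      exact (Real.continuous_exp.comp (by continuity)).mul
        (phi_cont.comp (continuous_id.mul continuous_const))
    exact hc.aestronglyMeasurable.mul hgm
  have haesmT' : AEStronglyMeasurable
      (fun k => -k ^ 4 * (Real.exp (-k ^ 4 * t) * Phi (k * x) * g k))
      (volume.restrict (Ioi 0)) := by
    exact (((continuous_pow 4).neg).aestronglyMeasurable).mul (haesmT t)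
  have hintT : Integrable (fun k => Real.exp (-k ^ 4 * t) * Phi (k * x) * g k)
      (volume.restrict (Ioi 0)) := by
    refine ((int_exp ht).mul_const (9 * C)).mono' (haesmT t) ?_
    filter_upwards [ae_restrict_mem measurableSet_Ioi] with k hk
    have h1 : |Phi (k * x)| ≤ 3 := phi_bound (mul_nonneg (le_of_lt hk) (le_of_lt hx))
    have h2 : |g k| ≤ 3 * C := hgb k (le_of_lt hk)
    have he : (0:ℝ) < Real.exp (-k ^ 4 * t) := Real.exp_pos _
    rw [Real.norm_eq_abs, abs_mul, abs_mul, abs_of_pos he]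
    calc Real.exp (-k ^ 4 * t) * |Phi (k * x)| * |g k|
        ≤ Real.exp (-k ^ 4 * t) * 3 * (3 * C) := by gcongr <;> positivity
      _ = Real.exp (-k ^ 4 * t) * (9 * C) := by ring
  have mainT := hasDerivAt_integral_of_dominated_loc_of_deriv_le
      (Metric.ball_mem_nhds t (by linarith : (0:ℝ) < t/2))
      (F := fun s k => Real.exp (-k ^ 4 * s) * Phi (k * x) * g k)
      (F' := fun s k => -k ^ 4 * (Real.exp (-k ^ 4 * s) * Phi (k * x) * g k))
      (bound := fun k => k ^ 4 * Real.exp (-k ^ 4 * (t/2)) * (9 * C))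
      (μ := volume.restrict (Ioi 0)) (x₀ := t)
      (Eventually.of_forall haesmT) hintT haesmT' ?_ ?_ ?_
  · have hD := mainT.2.const_mul (1 / Real.pi)
    have hEqT : (fun s => u s x) =ᶠ[nhds t]
        (fun s => (1 / Real.pi) * ∫ k in Set.Ioi (0:ℝ),
          Real.exp (-k ^ 4 * s) * Phi (k * x) * g k) := by
      filter_upwards [Ioi_mem_nhds ht] with s hs
      exact key s hs x (le_of_lt hx)
    have heq : (1 / Real.pi) * (∫ k in Set.Ioi (0:ℝ),
        -k ^ 4 * (Real.exp (-k ^ 4 * t) * Phi (k * x) * g k)) = -(v 4 x) := by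
      have h44 : v 4 x = (1 / Real.pi) * ∫ k in Set.Ioi (0:ℝ),
          k ^ 4 * Real.exp (-k ^ 4 * t) * Phi (k * x) * g k := by
        simp only [hvdef]
        rw [show PhiD 4 = Phi from rfl]
      rw [h44, ← mul_neg, ← integral_neg]
      congr 1
      refine integral_congr_ae (Eventually.of_forall fun k => ?_)
      ring
    refine (HasDerivAt.congr_of_eventuallyEq ?_ hEqT)
    rw [← heq]
    exact hD
  · filter_upwards [ae_restrict_mem measurableSet_Ioi] with k hk s hs
    obtain ⟨hs0, hs1⟩ := hball s hs
    have h1 : |Phi (k * x)| ≤ 3 := phi_bound (mul_nonneg (le_of_lt hk) (le_of_lt hx))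
    have h2 : |g k| ≤ 3 * C := hgb k (le_of_lt hk)
    have hk4 : (0:ℝ) ≤ k ^ 4 := pow_nonneg (le_of_lt hk) 4
    have hee : Real.exp (-k ^ 4 * s) ≤ Real.exp (-k ^ 4 * (t/2)) := by
      apply Real.exp_le_exp.mpr
      have := mul_nonneg hk4 (by linarith : (0:ℝ) ≤ s - t/2)
      nlinarith
    have he : (0:ℝ) < Real.exp (-k ^ 4 * s) := Real.exp_pos _
    rw [Real.norm_eq_abs, abs_mul, abs_mul, abs_mul, abs_neg,
      abs_of_nonneg hk4, abs_of_pos he]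
    calc k ^ 4 * (Real.exp (-k ^ 4 * s) * |Phi (k * x)| * |g k|)
        ≤ k ^ 4 * (Real.exp (-k ^ 4 * (t/2)) * 3 * (3 * C)) := by gcongr <;> positivity
      _ = k ^ 4 * Real.exp (-k ^ 4 * (t/2)) * (9 * C) := by ring
  · exact (int_pow_exp (half_pos ht) 4).mul_const (9 * C)
  · filter_upwards [ae_restrict_mem measurableSet_Ioi] with k hk s _
    have hD : HasDerivAt (fun s => Real.exp (-k ^ 4 * s))
        (-k ^ 4 * Real.exp (-k ^ 4 * s)) s := by
      have h0 := ((hasDerivAt_id s).const_mul (-k ^ 4)).exp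
      exact h0.congr_deriv (by simp only [id_eq, mul_one]; ring)
    have := (hD.mul_const (Phi (k * x))).mul_const (g k)
    exact this.congr_deriv (by ring)
end

section
/- For every integer j ≥ 0, every t > 0, and all x, y > 0, the y-derivatives of the clamped biharmonic heat kernel agree with x-derivatives of the modified kernels: ∂_y^{4j} K(t,x,y) = ∂ₓ^{4j} K(t,x,y), ∂_y^{4j+1} K(t,x,y) = ∂ₓ^{4j+1} K_a(t,x,y), ∂_y^{4j+2} K(t,x,y) = ∂ₓ^{4j+2} K_b(t,x,y), and ∂_y^{4j+3} K(t,x,y) = ∂ₓ^{4j+3} K_c(t,x,y). -/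
open MeasureTheory Filter Set

/-- `Φ₁(r) = e^{-r} - sin r - cos r`. -/
noncomputable def Phi1 (r : ℝ) : ℝ := Real.exp (-r) - Real.sin r - Real.cos r

/-- `Φ₂(r) = e^{-r} - sin r + cos r`. -/
noncomputable def Phi2 (r : ℝ) : ℝ := Real.exp (-r) - Real.sin r + Real.cos r

/-- `Φ₃(r) = e^{-r} + sin r + cos r`. -/
noncomputable def Phi3 (r : ℝ) : ℝ := Real.exp (-r) + Real.sin r + Real.cos r

/-- The modified kernel `K_a`. -/
noncomputable def Ka (t x y : ℝ) : ℝ :=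
  (1 / Real.pi) * ∫ k in Set.Ioi (0:ℝ), Real.exp (-k ^ 4 * t) * Phi3 (k * x) * Phi1 (k * y)

/-- The modified kernel `K_b`. -/
noncomputable def Kb (t x y : ℝ) : ℝ :=
  (1 / Real.pi) * ∫ k in Set.Ioi (0:ℝ), Real.exp (-k ^ 4 * t) * Phi2 (k * x) * Phi2 (k * y)

/-- The modified kernel `K_c`. -/
noncomputable def Kc (t x y : ℝ) : ℝ :=
  (1 / Real.pi) * ∫ k in Set.Ioi (0:ℝ), Real.exp (-k ^ 4 * t) * Phi1 (k * x) * Phi3 (k * y)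

noncomputable def Ef (v : ℝ × ℝ × ℝ) (r : ℝ) : ℝ :=
  v.1 * Real.exp (-r) + v.2.1 * Real.sin r + v.2.2 * Real.cos r

def Dv (v : ℝ × ℝ × ℝ) : ℝ × ℝ × ℝ := (-v.1, -v.2.2, v.2.1)

noncomputable def Iint (n : ℕ) (v w : ℝ × ℝ × ℝ) (t x y : ℝ) : ℝ :=
  ∫ k in Set.Ioi (0:ℝ), Real.exp (-k ^ 4 * t) * k ^ n * Ef v (k * x) * Ef w (k * y)

lemma Ef_hasDerivAt (v : ℝ × ℝ × ℝ) (k z : ℝ) :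
    HasDerivAt (fun z => Ef v (k * z)) (k * Ef (Dv v) (k * z)) z := by
  have h1 : HasDerivAt (fun z : ℝ => k * z) k z := by
    simpa using (hasDerivAt_id z).const_mul k
  have he : HasDerivAt (fun z : ℝ => Real.exp (-(k * z))) (-k * Real.exp (-(k * z))) z := by
    have := (h1.neg).exp
    simpa [mul_comm] using this
  have hs : HasDerivAt (fun z : ℝ => Real.sin (k * z)) (Real.cos (k * z) * k) z := h1.sin
  have hc : HasDerivAt (fun z : ℝ => Real.cos (k * z)) (-Real.sin (k * z) * k) z := h1.cos
  have := ((he.const_mul v.1).add (hs.const_mul v.2.1)).add (hc.const_mul v.2.2)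
  convert this using 1
  · rfl
  · rfl
  · funext y; simp only [Ef, Pi.add_apply]
  · simp [Ef, Dv]; ring

lemma Ef_bound (v : ℝ × ℝ × ℝ) {r : ℝ} (hr : 0 ≤ r) :
    |Ef v r| ≤ |v.1| + |v.2.1| + |v.2.2| := by
  have h1 : |v.1 * Real.exp (-r)| ≤ |v.1| := by
    rw [abs_mul]
    have : |Real.exp (-r)| ≤ 1 := by
      rw [abs_of_pos (Real.exp_pos _)]
      exact Real.exp_le_one_iff.2 (by linarith)
    calc |v.1| * |Real.exp (-r)| ≤ |v.1| * 1 := by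
          exact mul_le_mul_of_nonneg_left this (abs_nonneg _)
      _ = |v.1| := mul_one _
  have h2 : |v.2.1 * Real.sin r| ≤ |v.2.1| := by
    rw [abs_mul]
    calc |v.2.1| * |Real.sin r| ≤ |v.2.1| * 1 :=
          mul_le_mul_of_nonneg_left (Real.abs_sin_le_one r) (abs_nonneg _)
      _ = |v.2.1| := mul_one _
  have h3 : |v.2.2 * Real.cos r| ≤ |v.2.2| := by
    rw [abs_mul]
    calc |v.2.2| * |Real.cos r| ≤ |v.2.2| * 1 :=
          mul_le_mul_of_nonneg_left (Real.abs_cos_le_one r) (abs_nonneg _)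
      _ = |v.2.2| := mul_one _
  calc |Ef v r| ≤ |v.1 * Real.exp (-r)| + |v.2.1 * Real.sin r| + |v.2.2 * Real.cos r| := by
        unfold Ef; exact (abs_add_le _ _).trans (by gcongr; exact abs_add_le _ _)
    _ ≤ _ := by linarith

lemma integrable_poly_exp {t : ℝ} (ht : 0 < t) (n : ℕ) (c : ℝ) :
    IntegrableOn (fun k : ℝ => Real.exp (-k ^ 4 * t) * k ^ n * c) (Set.Ioi 0) := by
  have h : IntegrableOn (fun k : ℝ => k ^ (n:ℝ) * Real.exp (-t * k ^ (4:ℝ)) * c)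
      (Set.Ioi 0) := (integrableOn_rpow_mul_exp_neg_mul_rpow
    (lt_of_lt_of_le neg_one_lt_zero (Nat.cast_nonneg n)) (by norm_num : (0:ℝ) < 4) ht).mul_const c
  refine h.congr_fun (fun k hk => ?_) measurableSet_Ioi
  have e1 : k ^ ((n:ℝ)) = k ^ n := Real.rpow_natCast k n
  have e2 : k ^ ((4:ℝ)) = k ^ (4:ℕ) := by
    rw [show ((4:ℝ)) = ((4:ℕ):ℝ) by norm_num, Real.rpow_natCast]
  beta_reduce
  rw [e1, e2]; ring

noncomputable def Cv (v : ℝ × ℝ × ℝ) : ℝ := |v.1| + |v.2.1| + |v.2.2|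

lemma cont_integrand (n : ℕ) (v w : ℝ × ℝ × ℝ) (t x y : ℝ) :
    Continuous fun k : ℝ => Real.exp (-k ^ 4 * t) * k ^ n * Ef v (k * x) * Ef w (k * y) := by
  unfold Ef; fun_prop

lemma abs_integrand_le {k x y : ℝ} (hk : 0 < k) (hx : 0 ≤ x) (hy : 0 ≤ y)
    (n : ℕ) (v w : ℝ × ℝ × ℝ) (t : ℝ) :
    |Real.exp (-k ^ 4 * t) * k ^ n * Ef v (k * x) * Ef w (k * y)|
      ≤ Real.exp (-k ^ 4 * t) * k ^ n * (Cv v * Cv w) := by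
  have h1 := Ef_bound v (mul_nonneg hk.le hx)
  have h2 := Ef_bound w (mul_nonneg hk.le hy)
  have he : (0:ℝ) < Real.exp (-k ^ 4 * t) := Real.exp_pos _
  have hkn : (0:ℝ) < k ^ n := pow_pos hk n
  have heq : |Real.exp (-k ^ 4 * t) * k ^ n * Ef v (k * x) * Ef w (k * y)|
      = Real.exp (-k ^ 4 * t) * k ^ n * |Ef v (k * x)| * |Ef w (k * y)| := by
    rw [abs_mul, abs_mul, abs_mul, abs_of_pos he, abs_of_pos hkn]
  rw [heq, show Real.exp (-k ^ 4 * t) * k ^ n * (Cv v * Cv w)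
      = Real.exp (-k ^ 4 * t) * k ^ n * Cv v * Cv w by ring]
  have hcw : (0:ℝ) ≤ Cv w := le_trans (abs_nonneg _) h2
  have hcv : (0:ℝ) ≤ Cv v := le_trans (abs_nonneg _) h1
  gcongr <;> first | exact h1 | exact h2 | positivity

lemma Iint_integrableOn (n : ℕ) (v w : ℝ × ℝ × ℝ) {t x y : ℝ}
    (ht : 0 < t) (hx : 0 ≤ x) (hy : 0 ≤ y) :
    IntegrableOn (fun k : ℝ => Real.exp (-k ^ 4 * t) * k ^ n * Ef v (k * x) * Ef w (k * y))
      (Set.Ioi 0) := by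
  refine MeasureTheory.Integrable.mono (integrable_poly_exp ht n (Cv v * Cv w))
    ((cont_integrand n v w t x y).aestronglyMeasurable.restrict) ?_
  rw [ae_restrict_iff' measurableSet_Ioi]
  refine ae_of_all _ (fun k hk => ?_)
  have hk' : (0:ℝ) < k := hk
  rw [Real.norm_eq_abs, Real.norm_eq_abs]
  exact (abs_integrand_le hk' hx hy n v w t).trans (le_abs_self _)

lemma Iint_hasDerivAt (n : ℕ) (v w : ℝ × ℝ × ℝ) {t x y : ℝ}
    (ht : 0 < t) (hx : 0 < x) (hy : 0 < y) :
    HasDerivAt (fun z => Iint n v w t z y) (Iint (n + 1) (Dv v) w t x y) x := by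
  have hmain := hasDerivAt_integral_of_dominated_loc_of_deriv_le
    (F := fun z k => Real.exp (-k ^ 4 * t) * k ^ n * Ef v (k * z) * Ef w (k * y))
    (F' := fun z k => Real.exp (-k ^ 4 * t) * k ^ (n + 1) * Ef (Dv v) (k * z) * Ef w (k * y))
    (μ := volume.restrict (Set.Ioi 0)) (x₀ := x)
    (bound := fun k => Real.exp (-k ^ 4 * t) * k ^ (n + 1) * (Cv (Dv v) * Cv w))
    (Metric.ball_mem_nhds x (half_pos hx))
    (Eventually.of_forall fun z => (cont_integrand n v w t z y).aestronglyMeasurable.restrict)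
    (Iint_integrableOn n v w ht hx.le hy.le)
    ((cont_integrand (n + 1) (Dv v) w t x y).aestronglyMeasurable.restrict)
    ?_ (integrable_poly_exp ht (n + 1) _) ?_
  · exact hmain.2
  · rw [ae_restrict_iff' measurableSet_Ioi]
    refine ae_of_all _ (fun k hk z hz => ?_)
    have hk' : (0:ℝ) < k := hk
    have hz' : 0 < z := by
      have := abs_lt.1 (mem_ball_iff_norm.1 hz)
      have := this.1
      linarith
    rw [Real.norm_eq_abs]
    exact abs_integrand_le hk' hz'.le hy.le (n + 1) (Dv v) w t
  · refine ae_of_all _ (fun k z _ => ?_)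
    have h := ((Ef_hasDerivAt v k z).const_mul
      (Real.exp (-k ^ 4 * t) * k ^ n)).mul_const (Ef w (k * y))
    exact h.congr_deriv (by rw [pow_succ]; ring)

lemma Iint_iteratedDeriv (n : ℕ) (v w : ℝ × ℝ × ℝ) {t y : ℝ} (ht : 0 < t) (hy : 0 < y) :
    ∀ x > (0:ℝ), iteratedDeriv n (fun z => (1 / Real.pi) * Iint 0 v w t z y) x
      = (1 / Real.pi) * Iint n (Dv^[n] v) w t x y := by
  induction n with
  | zero => intro x hx; simp
  | succ n ih =>
    intro x hx
    rw [iteratedDeriv_succ]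
    have hev : iteratedDeriv n (fun z => (1 / Real.pi) * Iint 0 v w t z y)
        =ᶠ[nhds x] fun z => (1 / Real.pi) * Iint n (Dv^[n] v) w t z y :=
      Filter.eventuallyEq_of_mem (Ioi_mem_nhds hx) (fun z hz => ih z hz)
    rw [hev.deriv_eq]
    have h := ((Iint_hasDerivAt n (Dv^[n] v) w ht hx hy).const_mul (1 / Real.pi)).deriv
    rw [h, ← Function.iterate_succ_apply' Dv n v]

lemma Iint_swap (n : ℕ) (v w : ℝ × ℝ × ℝ) (t x y : ℝ) :
    Iint n v w t x y = Iint n w v t y x := by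
  unfold Iint; congr 1; funext k; ring

lemma Iint_congr (n : ℕ) (v w v' w' : ℝ × ℝ × ℝ) (t x y : ℝ)
    (h : ∀ r s : ℝ, Ef v r * Ef w s = Ef v' r * Ef w' s) :
    Iint n v w t x y = Iint n v' w' t x y := by
  unfold Iint; congr 1; funext k
  rw [mul_assoc, mul_assoc, h]; ring

lemma Dv_iterate_four (j : ℕ) (v : ℝ × ℝ × ℝ) : Dv^[4 * j] v = v := by
  induction j with
  | zero => simp
  | succ j ih =>
    have : 4 * (j + 1) = 4 * j + 4 := by ring
    rw [this, Function.iterate_add_apply, show Dv^[4] v = v by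
      show Dv (Dv (Dv (Dv v))) = v
      simp [Dv], ih]

lemma K_eq (t x y : ℝ) :
    K t x y = (1 / Real.pi) * Iint 0 (1, 1, -1) (1, 1, -1) t x y := by
  unfold K Iint; congr 1; congr 1; funext k; simp only [Phi, Ef]; ring

lemma Ka_eq (t x y : ℝ) :
    Ka t x y = (1 / Real.pi) * Iint 0 (1, 1, 1) (1, -1, -1) t x y := by
  unfold Ka Iint; congr 1; congr 1; funext k; simp only [Phi3, Phi1, Ef]; ring

lemma Kb_eq (t x y : ℝ) :
    Kb t x y = (1 / Real.pi) * Iint 0 (1, -1, 1) (1, -1, 1) t x y := by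
  unfold Kb Iint; congr 1; congr 1; funext k; simp only [Phi2, Ef]; ring

lemma Kc_eq (t x y : ℝ) :
    Kc t x y = (1 / Real.pi) * Iint 0 (1, -1, -1) (1, 1, 1) t x y := by
  unfold Kc Iint; congr 1; congr 1; funext k; simp only [Phi1, Phi3, Ef]; ring

lemma lhs_eq (n : ℕ) {t x y : ℝ} (ht : 0 < t) (hx : 0 < x) (hy : 0 < y) :
    iteratedDeriv n (fun w => K t x w) y
      = (1 / Real.pi) * Iint n (Dv^[n] (1, 1, -1)) (1, 1, -1) t y x := by
  have hfun : (fun w => K t x w)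
      = fun w => (1 / Real.pi) * Iint 0 (1, 1, -1) (1, 1, -1) t w x := by
    funext w; rw [K_eq, Iint_swap]
  rw [hfun, Iint_iteratedDeriv n (1, 1, -1) (1, 1, -1) ht hx y hy]

/-- the `y`-derivatives of the kernel `K` agree with `x`-derivatives of the
kernels `K`, `K_a`, `K_b`, `K_c` according to the residue of the order modulo 4. -/
theorem stmt9 :
    ∀ j : ℕ, ∀ t > (0:ℝ), ∀ x > (0:ℝ), ∀ y > (0:ℝ),
      iteratedDeriv (4 * j) (fun w => K t x w) y
        = iteratedDeriv (4 * j) (fun z => K t z y) x ∧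
      iteratedDeriv (4 * j + 1) (fun w => K t x w) y
        = iteratedDeriv (4 * j + 1) (fun z => Ka t z y) x ∧
      iteratedDeriv (4 * j + 2) (fun w => K t x w) y
        = iteratedDeriv (4 * j + 2) (fun z => Kb t z y) x ∧
      iteratedDeriv (4 * j + 3) (fun w => K t x w) y
        = iteratedDeriv (4 * j + 3) (fun z => Kc t z y) x := by
  intro j t ht x hx y hy
  have hKfun : (fun z => K t z y) = fun z => (1 / Real.pi) * Iint 0 (1, 1, -1) (1, 1, -1) t z y :=
    funext fun z => K_eq t z y
  have hKafun : (fun z => Ka t z y) = fun z => (1 / Real.pi) * Iint 0 (1, 1, 1) (1, -1, -1) t z y :=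
    funext fun z => Ka_eq t z y
  have hKbfun : (fun z => Kb t z y) = fun z => (1 / Real.pi) * Iint 0 (1, -1, 1) (1, -1, 1) t z y :=
    funext fun z => Kb_eq t z y
  have hKcfun : (fun z => Kc t z y) = fun z => (1 / Real.pi) * Iint 0 (1, -1, -1) (1, 1, 1) t z y :=
    funext fun z => Kc_eq t z y
  have hP0 : Dv^[4 * j] ((1, 1, -1) : ℝ × ℝ × ℝ) = (1, 1, -1) := Dv_iterate_four j _
  have hP1 : Dv^[4 * j + 1] ((1, 1, -1) : ℝ × ℝ × ℝ) = (-1, 1, 1) := by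
    rw [Function.iterate_add_apply, Function.iterate_one,
      show Dv ((1, 1, -1) : ℝ × ℝ × ℝ) = (-1, 1, 1) by norm_num [Dv]]
    exact Dv_iterate_four j _
  have hP2 : Dv^[4 * j + 2] ((1, 1, -1) : ℝ × ℝ × ℝ) = (1, -1, 1) := by
    rw [Function.iterate_add_apply,
      show Dv^[2] ((1, 1, -1) : ℝ × ℝ × ℝ) = (1, -1, 1) by norm_num [Dv, Function.iterate_succ_apply]]
    exact Dv_iterate_four j _
  have hP3 : Dv^[4 * j + 3] ((1, 1, -1) : ℝ × ℝ × ℝ) = (-1, -1, -1) := by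
    rw [Function.iterate_add_apply,
      show Dv^[3] ((1, 1, -1) : ℝ × ℝ × ℝ) = (-1, -1, -1) by
        norm_num [Dv, Function.iterate_succ_apply]]
    exact Dv_iterate_four j _
  have hQ1 : Dv^[4 * j + 1] ((1, 1, 1) : ℝ × ℝ × ℝ) = (-1, -1, 1) := by
    rw [Function.iterate_add_apply, Function.iterate_one,
      show Dv ((1, 1, 1) : ℝ × ℝ × ℝ) = (-1, -1, 1) by norm_num [Dv]]
    exact Dv_iterate_four j _
  have hQ2 : Dv^[4 * j + 2] ((1, -1, 1) : ℝ × ℝ × ℝ) = (1, 1, -1) := by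
    rw [Function.iterate_add_apply,
      show Dv^[2] ((1, -1, 1) : ℝ × ℝ × ℝ) = (1, 1, -1) by
        norm_num [Dv, Function.iterate_succ_apply]]
    exact Dv_iterate_four j _
  have hQ3 : Dv^[4 * j + 3] ((1, -1, -1) : ℝ × ℝ × ℝ) = (-1, -1, 1) := by
    rw [Function.iterate_add_apply,
      show Dv^[3] ((1, -1, -1) : ℝ × ℝ × ℝ) = (-1, -1, 1) by
        norm_num [Dv, Function.iterate_succ_apply]]
    exact Dv_iterate_four j _
  refine ⟨?_, ?_, ?_, ?_⟩
  · rw [lhs_eq (4 * j) ht hx hy, hP0, Iint_swap, hKfun,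
      Iint_iteratedDeriv (4 * j) _ _ ht hy x hx, hP0]
  · rw [lhs_eq (4 * j + 1) ht hx hy, hP1, Iint_swap, hKafun,
      Iint_iteratedDeriv (4 * j + 1) _ _ ht hy x hx, hQ1]
    congr 1
    exact Iint_congr _ _ _ _ _ _ _ _ (fun r s => by simp only [Ef]; ring)
  · rw [lhs_eq (4 * j + 2) ht hx hy, hP2, Iint_swap, hKbfun,
      Iint_iteratedDeriv (4 * j + 2) _ _ ht hy x hx, hQ2]
  · rw [lhs_eq (4 * j + 3) ht hx hy, hP3, Iint_swap, hKcfun,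
      Iint_iteratedDeriv (4 * j + 3) _ _ ht hy x hx, hQ3]
    congr 1
    exact Iint_congr _ _ _ _ _ _ _ _ (fun r s => by simp only [Ef]; ring)
end
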